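/- Let M ≥ 2 and N ∈ ℕ with N ≥ 18M², let p be a prime with 3N < p < 6N, let S ⊆ ℕ be multiplicatively [M]-syndetic, and let f, g : ℤ/pℤ → [0,1]. Then |Λ_{S∩[N/3]}(f) − Λ_{S∩[N/3]}(g)| ≤ 18M·‖f − g‖_{U³(ℤ/pℤ)}, where S∩[N/3] := S ∩ {1,…,⌊N/3⌋} is viewed as a subset of ℤ/pℤ. -/

import Mathlib

/-- `S` is multiplicatively `F`-syndetic: every positive `n` has some `t ∈ F` with `n*t ∈ S`. -/
def MultSyndeticWith (F : Finset ℕ) (S : Set ℕ) : Prop :=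
  ∀ n : ℕ, 0 < n → ∃ t ∈ F, n * t ∈ S

/-- The counting functional
`Λ_S(f₁,f₂,f₃) = (1/p)(1/|S|) ∑_{x ∈ ℤ/pℤ} ∑_{d ∈ S} f₁(x) f₂(x+d) f₃(x+2d)`. -/
noncomputable def Lam (p : ℕ) [NeZero p] (S : Finset (ZMod p))
    (f₁ f₂ f₃ : ZMod p → ℂ) : ℂ :=
  (p : ℂ)⁻¹ * (S.card : ℂ)⁻¹ *
    ∑ x : ZMod p, ∑ d ∈ S, f₁ x * f₂ (x + d) * f₃ (x + 2 * d)

/-- The multiplicative difference operator `Δ_h f(x) = f(x) · conj(f(x+h))`. -/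
def diffOp {p : ℕ} (h : ZMod p) (f : ZMod p → ℂ) : ZMod p → ℂ :=
  fun x => f x * (starRingEnd ℂ) (f (x + h))

/-- The Gowers `U³` norm of `f : ℤ/pℤ → ℂ`:
`‖f‖_{U³} = (𝔼_{x,h₁,h₂,h₃} Δ_{h₁}Δ_{h₂}Δ_{h₃} f(x))^{1/8}`. -/
noncomputable def gowersU3 (p : ℕ) [NeZero p] (f : ZMod p → ℂ) : ℝ :=
  ((∑ x : ZMod p, ∑ h₁ : ZMod p, ∑ h₂ : ZMod p, ∑ h₃ : ZMod p,
      diffOp h₁ (diffOp h₂ (diffOp h₃ f)) x).re / (p : ℝ) ^ 4) ^ ((1 : ℝ) / 8)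


/-- Port shim: the complex absolute value as an `AbsoluteValue`, equal to the norm. -/
noncomputable def Complex.abs : AbsoluteValue ℂ ℝ := NormedField.toAbsoluteValue ℂ

lemma Complex.abs_apply' (z : ℂ) : Complex.abs z = ‖z‖ := rfl

lemma Complex.abs_conj (z : ℂ) : Complex.abs ((starRingEnd ℂ) z) = Complex.abs z := by
  simp [Complex.abs_apply']

lemma Complex.abs_ofReal (r : ℝ) : Complex.abs (r : ℂ) = |r| := by
  simp [Complex.abs_apply']

lemma Complex.abs_natCast (n : ℕ) : Complex.abs (n : ℂ) = n := by
  simp [Complex.abs_apply']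

lemma Complex.sq_abs (z : ℂ) : Complex.abs z ^ 2 = Complex.normSq z := by
  rw [Complex.abs_apply', Complex.sq_norm]

section Aux

set_option linter.unusedSectionVars false

open Finset

variable {p : ℕ} [NeZero p]

/-- 3AP count at common difference `d`. -/
noncomputable def AA (f₁ f₂ f₃ : ZMod p → ℂ) (d : ZMod p) : ℂ :=
  ∑ x : ZMod p, f₁ x * f₂ (x + d) * f₃ (x + 2 * d)

/-- Total 3AP count. -/
noncomputable def TT (f₁ f₂ f₃ : ZMod p → ℂ) : ℂ :=
  ∑ d : ZMod p, AA f₁ f₂ f₃ d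

/-- Unnormalized `U²` quantity. -/
noncomputable def U2S (b : ZMod p → ℂ) : ℝ :=
  ∑ k : ZMod p, Complex.abs (∑ y : ZMod p, diffOp k b y) ^ 2

/-- Unnormalized `U³` quantity. -/
noncomputable def Wre (f : ZMod p → ℂ) : ℝ :=
  ∑ h : ZMod p, U2S (diffOp h f)

lemma U2S_nonneg (b : ZMod p → ℂ) : 0 ≤ U2S b :=
  Finset.sum_nonneg fun _ _ => by positivity

lemma Wre_nonneg (f : ZMod p → ℂ) : 0 ≤ Wre f :=
  Finset.sum_nonneg fun _ _ => U2S_nonneg _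

lemma diffOp_bdd {a : ZMod p → ℂ} (ha : ∀ x, Complex.abs (a x) ≤ 1) (h : ZMod p) :
    ∀ x, Complex.abs (diffOp h a x) ≤ 1 := by
  intro x
  simp only [diffOp, map_mul, Complex.abs_conj]
  exact mul_le_one₀ (ha x) (Complex.abs.nonneg _) (ha _)

lemma U2S_le {c : ZMod p → ℂ} (hc : ∀ x, Complex.abs (c x) ≤ 1) :
    U2S c ≤ (p : ℝ) ^ 3 := by
  have hb : ∀ k : ZMod p, Complex.abs (∑ y : ZMod p, diffOp k c y) ≤ (p : ℝ) := by
    intro k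
    calc Complex.abs (∑ y : ZMod p, diffOp k c y) ≤ ∑ y : ZMod p, Complex.abs (diffOp k c y) :=
          Complex.abs.sum_le _ _
      _ ≤ ∑ _y : ZMod p, (1 : ℝ) := Finset.sum_le_sum fun y _ => diffOp_bdd hc k y
      _ = (p : ℝ) := by simp [ZMod.card]
  calc U2S c ≤ ∑ _k : ZMod p, (p : ℝ) ^ 2 := by
        refine Finset.sum_le_sum fun k _ => ?_
        have := hb k
        have h0 := Complex.abs.nonneg (∑ y : ZMod p, diffOp k c y)
        nlinarith
    _ = (p : ℝ) ^ 3 := by simp [ZMod.card]; ring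

set_option linter.unusedSectionVars false

lemma sum_abs_sq_a_le (a : ZMod p → ℂ) (ha : ∀ x, Complex.abs (a x) ≤ 1) :
    ∑ x : ZMod p, Complex.abs (a x) ^ 2 ≤ (p : ℝ) := by
  calc ∑ x : ZMod p, Complex.abs (a x) ^ 2 ≤ ∑ _x : ZMod p, (1 : ℝ) := by
        refine Finset.sum_le_sum fun x _ => ?_
        have := ha x; have h0 := Complex.abs.nonneg (a x); nlinarith
    _ = (p : ℝ) := by simp [ZMod.card]

lemma core1 (h2 : IsUnit (2 : ZMod p)) (a b c : ZMod p → ℂ)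
    (ha : ∀ x, Complex.abs (a x) ≤ 1) :
    Complex.abs (TT a b c) ^ 4 ≤ (p : ℝ) ^ 2 * (U2S b * U2S c) := by
  classical
  set g : ZMod p → ℂ := fun x => ∑ y : ZMod p, b y * c (2 * y - x) with hg
  -- Step (i): TT a b c = ∑ x, a x * g x
  have hTT : TT a b c = ∑ x : ZMod p, a x * g x := by
    rw [TT]
    unfold AA
    rw [Finset.sum_comm]
    refine Finset.sum_congr rfl fun x _ => ?_
    rw [hg, Finset.mul_sum]
    refine Fintype.sum_equiv (Equiv.addLeft x) _ _ fun d => ?_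
    simp only [Equiv.coe_addLeft]
    have h1 : 2 * (x + d) - x = x + 2 * d := by ring
    rw [h1]
    ring
  -- Step (iii): the key complex identity
  have hkey : ((∑ x : ZMod p, Complex.abs (g x) ^ 2 : ℝ) : ℂ) =
      ∑ k : ZMod p, (∑ y : ZMod p, diffOp k b y) * (∑ u : ZMod p, diffOp (2 * k) c u) := by
    rw [Complex.ofReal_sum]
    have hstep : ∀ x : ZMod p, ((Complex.abs (g x) ^ 2 : ℝ) : ℂ) =
        g x * (starRingEnd ℂ) (g x) := by
      intro x
      rw [Complex.mul_conj, Complex.sq_abs]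
    calc (∑ x : ZMod p, ((Complex.abs (g x) ^ 2 : ℝ) : ℂ))
        = ∑ x : ZMod p, g x * (starRingEnd ℂ) (g x) :=
          Finset.sum_congr rfl fun x _ => hstep x
      _ = ∑ x : ZMod p, ∑ y : ZMod p, ∑ z : ZMod p,
            (b y * c (2 * y - x)) * ((starRingEnd ℂ) (b z) * (starRingEnd ℂ) (c (2 * z - x))) := by
          refine Finset.sum_congr rfl fun x _ => ?_
          rw [hg]
          simp only [map_sum, map_mul]
          rw [Finset.sum_mul_sum]
      _ = ∑ t : ZMod p × ZMod p × ZMod p,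
            (b t.2.1 * c (2 * t.2.1 - t.1)) *
              ((starRingEnd ℂ) (b t.2.2) * (starRingEnd ℂ) (c (2 * t.2.2 - t.1))) := by
          rw [Fintype.sum_prod_type]
          refine Finset.sum_congr rfl fun x _ => ?_
          rw [Fintype.sum_prod_type]
      _ = ∑ t : ZMod p × ZMod p × ZMod p,
            diffOp t.1 b t.2.1 * diffOp (2 * t.1) c t.2.2 := by
          refine Fintype.sum_equiv
            ⟨fun t => (t.2.2 - t.2.1, t.2.1, 2 * t.2.1 - t.1),
             fun t => (2 * t.2.1 - t.2.2, t.2.1, t.2.1 + t.1),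
             fun t => by
               refine Prod.ext ?_ (Prod.ext ?_ ?_) <;> simp <;> ring,
             fun t => by
               refine Prod.ext ?_ (Prod.ext ?_ ?_) <;> simp <;> ring⟩ _ _ fun t => ?_
          obtain ⟨x, y, z⟩ := t
          simp only [diffOp, Equiv.coe_fn_mk]
          have e1 : y + (z - y) = z := by ring
          have e2 : 2 * y - x + 2 * (z - y) = 2 * z - x := by ring
          rw [e1, e2]
          ring
      _ = ∑ k : ZMod p, (∑ y : ZMod p, diffOp k b y) * (∑ u : ZMod p, diffOp (2 * k) c u) := by
          rw [Fintype.sum_prod_type]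
          refine Finset.sum_congr rfl fun k _ => ?_
          rw [Fintype.sum_prod_type, Finset.sum_mul]
          refine Finset.sum_congr rfl fun y _ => ?_
          rw [Finset.mul_sum]
  -- norms
  set D : ZMod p → ℝ := fun k => Complex.abs (∑ y : ZMod p, diffOp k b y) with hD
  set E : ZMod p → ℝ := fun k => Complex.abs (∑ u : ZMod p, diffOp (2 * k) c u) with hE
  have hgsum : ∑ x : ZMod p, Complex.abs (g x) ^ 2 ≤ ∑ k : ZMod p, D k * E k := by
    have h1 : ∑ x : ZMod p, Complex.abs (g x) ^ 2 =
        Complex.abs ((∑ x : ZMod p, Complex.abs (g x) ^ 2 : ℝ) : ℂ) := by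
      rw [Complex.abs_ofReal, abs_of_nonneg]
      exact Finset.sum_nonneg fun x _ => sq_nonneg _
    rw [h1, hkey]
    calc Complex.abs (∑ k : ZMod p, (∑ y : ZMod p, diffOp k b y) *
            (∑ u : ZMod p, diffOp (2 * k) c u))
        ≤ ∑ k : ZMod p, Complex.abs ((∑ y : ZMod p, diffOp k b y) *
            (∑ u : ZMod p, diffOp (2 * k) c u)) := Complex.abs.sum_le _ _
      _ = ∑ k : ZMod p, D k * E k := by
          refine Finset.sum_congr rfl fun k _ => ?_
          rw [map_mul]
  have hDE : (∑ k : ZMod p, D k * E k) ^ 2 ≤ U2S b * U2S c := by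
    have hcs := Finset.sum_mul_sq_le_sq_mul_sq Finset.univ D E
    have hDb : ∑ k : ZMod p, D k ^ 2 = U2S b := by
      rw [U2S]
    have hEc : ∑ k : ZMod p, E k ^ 2 = U2S c := by
      rw [U2S]
      refine Fintype.sum_equiv (Units.mulLeft h2.unit) _ _ fun k => ?_
      simp only [hE, Units.mulLeft, Equiv.coe_fn_mk, IsUnit.unit_spec]
    rw [hDb, hEc] at hcs
    exact hcs
  -- Step (ii) and final chain
  have habs : Complex.abs (TT a b c) ^ 2 ≤ (p : ℝ) * ∑ x : ZMod p, Complex.abs (g x) ^ 2 := by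
    have h1 : Complex.abs (TT a b c) ≤ ∑ x : ZMod p, Complex.abs (a x) * Complex.abs (g x) := by
      rw [hTT]
      refine (Complex.abs.sum_le _ _).trans ?_
      refine le_of_eq (Finset.sum_congr rfl fun x _ => ?_)
      rw [map_mul]
    have h2' : (∑ x : ZMod p, Complex.abs (a x) * Complex.abs (g x)) ^ 2 ≤
        (∑ x : ZMod p, Complex.abs (a x) ^ 2) * ∑ x : ZMod p, Complex.abs (g x) ^ 2 :=
      Finset.sum_mul_sq_le_sq_mul_sq Finset.univ _ _
    have h3 : (∑ x : ZMod p, Complex.abs (a x) ^ 2) * (∑ x : ZMod p, Complex.abs (g x) ^ 2) ≤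
        (p : ℝ) * ∑ x : ZMod p, Complex.abs (g x) ^ 2 := by
      refine mul_le_mul_of_nonneg_right (sum_abs_sq_a_le a ha) ?_
      exact Finset.sum_nonneg fun x _ => sq_nonneg _
    nlinarith [Complex.abs.nonneg (TT a b c),
      Finset.sum_nonneg (fun x (_ : x ∈ Finset.univ) =>
        mul_nonneg (Complex.abs.nonneg (a x)) (Complex.abs.nonneg (g x)))]
  have hgnn : 0 ≤ ∑ x : ZMod p, Complex.abs (g x) ^ 2 :=
    Finset.sum_nonneg fun x _ => sq_nonneg _
  calc Complex.abs (TT a b c) ^ 4 = (Complex.abs (TT a b c) ^ 2) ^ 2 := by ring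
    _ ≤ ((p : ℝ) * ∑ x : ZMod p, Complex.abs (g x) ^ 2) ^ 2 := by
        have := Complex.abs.nonneg (TT a b c)
        nlinarith
    _ = (p : ℝ) ^ 2 * (∑ x : ZMod p, Complex.abs (g x) ^ 2) ^ 2 := by ring
    _ ≤ (p : ℝ) ^ 2 * (U2S b * U2S c) := by
        have h4 : (∑ x : ZMod p, Complex.abs (g x) ^ 2) ^ 2 ≤ U2S b * U2S c := by
          calc (∑ x : ZMod p, Complex.abs (g x) ^ 2) ^ 2 ≤ (∑ k : ZMod p, D k * E k) ^ 2 := by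
                have hDEnn : 0 ≤ ∑ k : ZMod p, D k * E k :=
                  Finset.sum_nonneg fun k _ =>
                    mul_nonneg (Complex.abs.nonneg _) (Complex.abs.nonneg _)
                nlinarith
            _ ≤ U2S b * U2S c := hDE
        have hp2 : (0 : ℝ) ≤ (p : ℝ) ^ 2 := by positivity
        exact mul_le_mul_of_nonneg_left h4 hp2

lemma TT_rev (a b c : ZMod p → ℂ) : TT a b c = TT c b a := by
  unfold TT AA
  rw [← Fintype.sum_prod_type', ← Fintype.sum_prod_type']
  refine Fintype.sum_equiv
    ⟨fun t => (-t.1, t.2 + 2 * t.1), fun t => (-t.1, t.2 + 2 * t.1),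
     fun t => by refine Prod.ext ?_ ?_ <;> simp <;> ring,
     fun t => by refine Prod.ext ?_ ?_ <;> simp <;> ring⟩ _ _ fun t => ?_
  obtain ⟨d, x⟩ := t
  simp only [Equiv.coe_fn_mk]
  have e1 : x + 2 * d + -d = x + d := by ring
  have e2 : x + 2 * d + 2 * -d = x := by ring
  rw [e1, e2]
  ring

lemma TT4_3 (h2 : IsUnit (2 : ZMod p)) (a b c : ZMod p → ℂ)
    (ha : ∀ x, Complex.abs (a x) ≤ 1) (hb : ∀ x, Complex.abs (b x) ≤ 1) :
    Complex.abs (TT a b c) ^ 4 ≤ (p : ℝ) ^ 5 * U2S c := by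
  calc Complex.abs (TT a b c) ^ 4 ≤ (p : ℝ) ^ 2 * (U2S b * U2S c) := core1 h2 a b c ha
    _ ≤ (p : ℝ) ^ 2 * ((p : ℝ) ^ 3 * U2S c) := by
        have := mul_le_mul_of_nonneg_right (U2S_le hb) (U2S_nonneg c)
        have hp2 : (0 : ℝ) ≤ (p : ℝ) ^ 2 := by positivity
        exact mul_le_mul_of_nonneg_left this hp2
    _ = (p : ℝ) ^ 5 * U2S c := by ring

lemma TT4_2 (h2 : IsUnit (2 : ZMod p)) (a b c : ZMod p → ℂ)
    (ha : ∀ x, Complex.abs (a x) ≤ 1) (hc : ∀ x, Complex.abs (c x) ≤ 1) :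
    Complex.abs (TT a b c) ^ 4 ≤ (p : ℝ) ^ 5 * U2S b := by
  calc Complex.abs (TT a b c) ^ 4 ≤ (p : ℝ) ^ 2 * (U2S b * U2S c) := core1 h2 a b c ha
    _ ≤ (p : ℝ) ^ 2 * (U2S b * (p : ℝ) ^ 3) := by
        have := mul_le_mul_of_nonneg_left (U2S_le hc) (U2S_nonneg b)
        have hp2 : (0 : ℝ) ≤ (p : ℝ) ^ 2 := by positivity
        exact mul_le_mul_of_nonneg_left this hp2
    _ = (p : ℝ) ^ 5 * U2S b := by ring

lemma TT4_1 (h2 : IsUnit (2 : ZMod p)) (a b c : ZMod p → ℂ)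
    (hb : ∀ x, Complex.abs (b x) ≤ 1) (hc : ∀ x, Complex.abs (c x) ≤ 1) :
    Complex.abs (TT a b c) ^ 4 ≤ (p : ℝ) ^ 5 * U2S a := by
  rw [TT_rev]
  exact TT4_3 h2 c b a hc hb

/-- Step 2: sum of squares of AP counts equals sum over `h` of differenced counts. -/
lemma step2 (f₁ f₂ f₃ : ZMod p → ℂ) :
    ((∑ d : ZMod p, Complex.abs (AA f₁ f₂ f₃ d) ^ 2 : ℝ) : ℂ) =
      ∑ h : ZMod p, TT (diffOp h f₁) (diffOp h f₂) (diffOp h f₃) := by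
  rw [Complex.ofReal_sum]
  have hstep : ∀ d : ZMod p, ((Complex.abs (AA f₁ f₂ f₃ d) ^ 2 : ℝ) : ℂ) =
      AA f₁ f₂ f₃ d * (starRingEnd ℂ) (AA f₁ f₂ f₃ d) := by
    intro d
    rw [Complex.mul_conj, Complex.sq_abs]
  calc (∑ d : ZMod p, ((Complex.abs (AA f₁ f₂ f₃ d) ^ 2 : ℝ) : ℂ))
      = ∑ d : ZMod p, AA f₁ f₂ f₃ d * (starRingEnd ℂ) (AA f₁ f₂ f₃ d) :=
        Finset.sum_congr rfl fun d _ => hstep d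
    _ = ∑ t : ZMod p × ZMod p × ZMod p,
          (f₁ t.2.1 * f₂ (t.2.1 + t.1) * f₃ (t.2.1 + 2 * t.1)) *
            ((starRingEnd ℂ) (f₁ t.2.2) * (starRingEnd ℂ) (f₂ (t.2.2 + t.1)) *
              (starRingEnd ℂ) (f₃ (t.2.2 + 2 * t.1))) := by
        rw [Fintype.sum_prod_type]
        refine Finset.sum_congr rfl fun d _ => ?_
        rw [AA]
        simp only [map_sum, map_mul]
        rw [Finset.sum_mul_sum, Fintype.sum_prod_type]
    _ = ∑ t : ZMod p × ZMod p × ZMod p,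
          diffOp t.1 f₁ t.2.2 * diffOp t.1 f₂ (t.2.2 + t.2.1) *
            diffOp t.1 f₃ (t.2.2 + 2 * t.2.1) := by
        refine Fintype.sum_equiv
          ⟨fun t => (t.2.2 - t.2.1, t.1, t.2.1),
           fun t => (t.2.1, t.2.2, t.2.2 + t.1),
           fun t => by refine Prod.ext ?_ (Prod.ext ?_ ?_) <;> simp <;> ring,
           fun t => by refine Prod.ext ?_ (Prod.ext ?_ ?_) <;> simp <;> ring⟩ _ _ fun t => ?_
        obtain ⟨d, x, y⟩ := t
        simp only [diffOp, Equiv.coe_fn_mk]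
        have e1 : x + (y - x) = y := by ring
        have e2 : x + d + (y - x) = y + d := by ring
        have e3 : x + 2 * d + (y - x) = y + 2 * d := by ring
        rw [e1, e2, e3]
        ring
    _ = ∑ h : ZMod p, TT (diffOp h f₁) (diffOp h f₂) (diffOp h f₃) := by
        rw [Fintype.sum_prod_type]
        refine Finset.sum_congr rfl fun h _ => ?_
        rw [TT, Fintype.sum_prod_type]
        rfl

/-- power mean inequality: (∑ a)⁴ ≤ p³ ∑ a⁴ for nonneg a over ZMod p. -/
lemma sum_pow4 (a : ZMod p → ℝ) (ha : ∀ k, 0 ≤ a k) :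
    (∑ k : ZMod p, a k) ^ 4 ≤ (p : ℝ) ^ 3 * ∑ k : ZMod p, a k ^ 4 := by
  have hcard : ((Finset.univ : Finset (ZMod p)).card : ℝ) = (p : ℝ) := by simp [ZMod.card]
  have h1 : (∑ k : ZMod p, a k) ^ 2 ≤ (p : ℝ) * ∑ k : ZMod p, a k ^ 2 := by
    have := Finset.sum_mul_sq_le_sq_mul_sq Finset.univ (fun _ : ZMod p => (1 : ℝ)) a
    simpa [hcard] using this
  have h2 : (∑ k : ZMod p, a k ^ 2) ^ 2 ≤ (p : ℝ) * ∑ k : ZMod p, a k ^ 4 := by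
    have := Finset.sum_mul_sq_le_sq_mul_sq Finset.univ (fun _ : ZMod p => (1 : ℝ))
      (fun k => a k ^ 2)
    have h4 : ∀ k : ZMod p, (a k ^ 2) ^ 2 = a k ^ 4 := fun k => by ring
    simpa [hcard, h4] using this
  have hs1 : 0 ≤ ∑ k : ZMod p, a k := Finset.sum_nonneg fun k _ => ha k
  have hs2 : 0 ≤ ∑ k : ZMod p, a k ^ 2 := Finset.sum_nonneg fun k _ => sq_nonneg _
  have hp0 : (0 : ℝ) ≤ (p : ℝ) := Nat.cast_nonneg p
  calc (∑ k : ZMod p, a k) ^ 4 = ((∑ k : ZMod p, a k) ^ 2) ^ 2 := by ring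
    _ ≤ ((p : ℝ) * ∑ k : ZMod p, a k ^ 2) ^ 2 := by nlinarith
    _ = (p : ℝ) ^ 2 * (∑ k : ZMod p, a k ^ 2) ^ 2 := by ring
    _ ≤ (p : ℝ) ^ 2 * ((p : ℝ) * ∑ k : ZMod p, a k ^ 4) := by nlinarith
    _ = (p : ℝ) ^ 3 * ∑ k : ZMod p, a k ^ 4 := by ring

/-- Main von Neumann-type estimate. -/
lemma vonNeumann (S : Finset (ZMod p)) (f₁ f₂ f₃ t : ZMod p → ℂ)
    (hkey : ∀ h : ZMod p,
      Complex.abs (TT (diffOp h f₁) (diffOp h f₂) (diffOp h f₃)) ^ 4 ≤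
        (p : ℝ) ^ 5 * U2S (diffOp h t)) :
    Complex.abs (∑ d ∈ S, AA f₁ f₂ f₃ d) ^ 8 ≤
      (S.card : ℝ) ^ 4 * ((p : ℝ) ^ 8 * Wre t) := by
  classical
  have h1 : Complex.abs (∑ d ∈ S, AA f₁ f₂ f₃ d) ^ 2 ≤
      (S.card : ℝ) * ∑ d : ZMod p, Complex.abs (AA f₁ f₂ f₃ d) ^ 2 := by
    have ht1 : Complex.abs (∑ d ∈ S, AA f₁ f₂ f₃ d) ≤
        ∑ d ∈ S, Complex.abs (AA f₁ f₂ f₃ d) := Complex.abs.sum_le _ _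
    have ht2 : (∑ d ∈ S, Complex.abs (AA f₁ f₂ f₃ d)) ^ 2 ≤
        (S.card : ℝ) * ∑ d ∈ S, Complex.abs (AA f₁ f₂ f₃ d) ^ 2 := by
      have := Finset.sum_mul_sq_le_sq_mul_sq S (fun _ => (1 : ℝ))
        (fun d => Complex.abs (AA f₁ f₂ f₃ d))
      simpa using this
    have ht3 : ∑ d ∈ S, Complex.abs (AA f₁ f₂ f₃ d) ^ 2 ≤
        ∑ d : ZMod p, Complex.abs (AA f₁ f₂ f₃ d) ^ 2 :=
      Finset.sum_le_sum_of_subset_of_nonneg (Finset.subset_univ S)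
        fun d _ _ => sq_nonneg _
    have h0 := Complex.abs.nonneg (∑ d ∈ S, AA f₁ f₂ f₃ d)
    have hs0 : (0 : ℝ) ≤ (S.card : ℝ) := Nat.cast_nonneg _
    nlinarith [Finset.sum_nonneg (fun d (_ : d ∈ S) => Complex.abs.nonneg (AA f₁ f₂ f₃ d))]
  have h2 : ∑ d : ZMod p, Complex.abs (AA f₁ f₂ f₃ d) ^ 2 ≤
      ∑ h : ZMod p, Complex.abs (TT (diffOp h f₁) (diffOp h f₂) (diffOp h f₃)) := by
    have he : ∑ d : ZMod p, Complex.abs (AA f₁ f₂ f₃ d) ^ 2 =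
        Complex.abs ((∑ d : ZMod p, Complex.abs (AA f₁ f₂ f₃ d) ^ 2 : ℝ) : ℂ) := by
      rw [Complex.abs_ofReal, abs_of_nonneg]
      exact Finset.sum_nonneg fun d _ => sq_nonneg _
    rw [he, step2]
    exact Complex.abs.sum_le _ _
  have h3 : (∑ h : ZMod p, Complex.abs (TT (diffOp h f₁) (diffOp h f₂) (diffOp h f₃))) ^ 4 ≤
      (p : ℝ) ^ 8 * Wre t := by
    calc (∑ h : ZMod p, Complex.abs (TT (diffOp h f₁) (diffOp h f₂) (diffOp h f₃))) ^ 4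
        ≤ (p : ℝ) ^ 3 * ∑ h : ZMod p,
            Complex.abs (TT (diffOp h f₁) (diffOp h f₂) (diffOp h f₃)) ^ 4 :=
          sum_pow4 _ fun h => Complex.abs.nonneg _
      _ ≤ (p : ℝ) ^ 3 * ∑ h : ZMod p, (p : ℝ) ^ 5 * U2S (diffOp h t) := by
          refine mul_le_mul_of_nonneg_left (Finset.sum_le_sum fun h _ => hkey h) ?_
          positivity
      _ = (p : ℝ) ^ 8 * Wre t := by
          rw [← Finset.mul_sum, Wre]
          ring
  have h0 := Complex.abs.nonneg (∑ d ∈ S, AA f₁ f₂ f₃ d)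
  have hs0 : (0 : ℝ) ≤ (S.card : ℝ) := Nat.cast_nonneg _
  have hsum2nn : (0 : ℝ) ≤ ∑ d : ZMod p, Complex.abs (AA f₁ f₂ f₃ d) ^ 2 :=
    Finset.sum_nonneg fun d _ => sq_nonneg _
  have habsnn : (0 : ℝ) ≤ ∑ h : ZMod p,
      Complex.abs (TT (diffOp h f₁) (diffOp h f₂) (diffOp h f₃)) :=
    Finset.sum_nonneg fun h _ => Complex.abs.nonneg _
  calc Complex.abs (∑ d ∈ S, AA f₁ f₂ f₃ d) ^ 8
      = (Complex.abs (∑ d ∈ S, AA f₁ f₂ f₃ d) ^ 2) ^ 4 := by ring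
    _ ≤ ((S.card : ℝ) * ∑ d : ZMod p, Complex.abs (AA f₁ f₂ f₃ d) ^ 2) ^ 4 := by
        have := pow_le_pow_left₀ (by positivity) h1 4
        simpa using this
    _ = (S.card : ℝ) ^ 4 * (∑ d : ZMod p, Complex.abs (AA f₁ f₂ f₃ d) ^ 2) ^ 4 := by ring
    _ ≤ (S.card : ℝ) ^ 4 *
          (∑ h : ZMod p, Complex.abs (TT (diffOp h f₁) (diffOp h f₂) (diffOp h f₃))) ^ 4 := by
        refine mul_le_mul_of_nonneg_left ?_ (by positivity)
        exact pow_le_pow_left₀ hsum2nn h2 4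
    _ ≤ (S.card : ℝ) ^ 4 * ((p : ℝ) ^ 8 * Wre t) :=
        mul_le_mul_of_nonneg_left h3 (by positivity)

lemma inner_u2 (G : ZMod p → ℂ) :
    ∑ x : ZMod p, ∑ h₁ : ZMod p, diffOp h₁ G x =
      ((Complex.abs (∑ x : ZMod p, G x) ^ 2 : ℝ) : ℂ) := by
  have hx : ∀ x : ZMod p, ∑ h₁ : ZMod p, diffOp h₁ G x =
      G x * (starRingEnd ℂ) (∑ y : ZMod p, G y) := by
    intro x
    rw [map_sum, Finset.mul_sum]
    refine Fintype.sum_equiv (Equiv.addLeft x) _ _ fun h₁ => ?_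
    simp only [diffOp, Equiv.coe_addLeft]
  calc ∑ x : ZMod p, ∑ h₁ : ZMod p, diffOp h₁ G x
      = ∑ x : ZMod p, G x * (starRingEnd ℂ) (∑ y : ZMod p, G y) :=
        Finset.sum_congr rfl fun x _ => hx x
    _ = (∑ x : ZMod p, G x) * (starRingEnd ℂ) (∑ y : ZMod p, G y) := by
        rw [Finset.sum_mul]
    _ = ((Complex.abs (∑ x : ZMod p, G x) ^ 2 : ℝ) : ℂ) := by
        rw [Complex.mul_conj, Complex.sq_abs]

set_option maxHeartbeats 1000000 in
lemma gowers_eq (f : ZMod p → ℂ) :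
    (∑ x : ZMod p, ∑ h₁ : ZMod p, ∑ h₂ : ZMod p, ∑ h₃ : ZMod p,
      diffOp h₁ (diffOp h₂ (diffOp h₃ f)) x).re = Wre f := by
  have hmain : (∑ x : ZMod p, ∑ h₁ : ZMod p, ∑ h₂ : ZMod p, ∑ h₃ : ZMod p,
      diffOp h₁ (diffOp h₂ (diffOp h₃ f)) x) = ((Wre f : ℝ) : ℂ) := by
    calc ∑ x : ZMod p, ∑ h₁ : ZMod p, ∑ h₂ : ZMod p, ∑ h₃ : ZMod p,
          diffOp h₁ (diffOp h₂ (diffOp h₃ f)) x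
        = ∑ t : ZMod p × ZMod p × ZMod p × ZMod p,
            diffOp t.2.1 (diffOp t.2.2.1 (diffOp t.2.2.2 f)) t.1 := by
          rw [Fintype.sum_prod_type]
          refine Finset.sum_congr rfl fun x _ => ?_
          rw [Fintype.sum_prod_type]
          refine Finset.sum_congr rfl fun h₁ _ => ?_
          rw [Fintype.sum_prod_type]
      _ = ∑ t : ZMod p × ZMod p × ZMod p × ZMod p,
            diffOp t.2.2.2 (diffOp t.1 (diffOp t.2.1 f)) t.2.2.1 := by
          refine Fintype.sum_equiv
            ⟨fun t => (t.2.2.1, t.2.2.2, t.1, t.2.1),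
             fun t => (t.2.2.1, t.2.2.2, t.1, t.2.1),
             fun t => rfl, fun t => rfl⟩ _ _ fun t => rfl
      _ = ∑ h₂ : ZMod p, ∑ h₃ : ZMod p, ∑ x : ZMod p, ∑ h₁ : ZMod p,
            diffOp h₁ (diffOp h₂ (diffOp h₃ f)) x := by
          rw [Fintype.sum_prod_type]
          refine Finset.sum_congr rfl fun h₂ _ => ?_
          rw [Fintype.sum_prod_type]
          refine Finset.sum_congr rfl fun h₃ _ => ?_
          rw [Fintype.sum_prod_type]
      _ = ∑ h₂ : ZMod p, ∑ h₃ : ZMod p,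
            ((Complex.abs (∑ x : ZMod p, diffOp h₂ (diffOp h₃ f) x) ^ 2 : ℝ) : ℂ) := by
          refine Finset.sum_congr rfl fun h₂ _ => Finset.sum_congr rfl fun h₃ _ => ?_
          exact inner_u2 _
      _ = ((Wre f : ℝ) : ℂ) := by
          rw [Wre]
          push_cast
          rw [Finset.sum_comm]
          refine Finset.sum_congr rfl fun h₂ _ => ?_
          rw [U2S]
          push_cast
          rfl
  rw [hmain, Complex.ofReal_re]

lemma lam_le (S : Finset (ZMod p)) (hS0 : 0 < S.card) (C : ℝ) (hC0 : 0 ≤ C)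
    (hC : (p : ℝ) ≤ C ^ 2 * S.card) (f₁ f₂ f₃ t : ZMod p → ℂ)
    (hkey : ∀ h : ZMod p,
      Complex.abs (TT (diffOp h f₁) (diffOp h f₂) (diffOp h f₃)) ^ 4 ≤
        (p : ℝ) ^ 5 * U2S (diffOp h t)) :
    Complex.abs (Lam p S f₁ f₂ f₃) ≤ C * gowersU3 p t := by
  have hp0 : (0 : ℝ) < (p : ℝ) := by
    have := NeZero.pos p
    exact_mod_cast this
  have hc0 : (0 : ℝ) < (S.card : ℝ) := by exact_mod_cast hS0
  have hW : 0 ≤ Wre t := Wre_nonneg t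
  set Z : ℂ := ∑ d ∈ S, AA f₁ f₂ f₃ d with hZ
  have habs : Complex.abs (Lam p S f₁ f₂ f₃) = Complex.abs Z / ((p : ℝ) * S.card) := by
    have hswap : (∑ x : ZMod p, ∑ d ∈ S, f₁ x * f₂ (x + d) * f₃ (x + 2 * d)) = Z := by
      rw [hZ, Finset.sum_comm]
      rfl
    rw [Lam, hswap, map_mul, map_mul, map_inv₀, map_inv₀, Complex.abs_natCast,
      Complex.abs_natCast]
    ring
  have hg : gowersU3 p t = (Wre t / (p : ℝ) ^ 4) ^ ((1 : ℝ) / 8) := by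
    rw [gowersU3, gowers_eq]
  have hg8 : (gowersU3 p t) ^ (8 : ℕ) = Wre t / (p : ℝ) ^ 4 := by
    rw [hg, one_div]
    have h8 : ((8 : ℕ) : ℝ) = (8 : ℝ) := by norm_num
    rw [← h8, Real.rpow_inv_natCast_pow (by positivity) (by norm_num)]
  have hgnn : 0 ≤ gowersU3 p t := by
    rw [hg]
    exact Real.rpow_nonneg (by positivity) _
  refine le_of_pow_le_pow_left₀ (n := 8) (by norm_num) (by positivity) ?_
  rw [habs, div_pow, mul_pow C (gowersU3 p t) 8, hg8]
  rw [div_le_iff₀ (by positivity)]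
  have h8' := vonNeumann S f₁ f₂ f₃ t hkey
  have key : (p : ℝ) ^ 4 ≤ C ^ 8 * (S.card : ℝ) ^ 4 := by
    calc (p : ℝ) ^ 4 ≤ (C ^ 2 * S.card) ^ 4 := pow_le_pow_left₀ hp0.le hC 4
      _ = C ^ 8 * (S.card : ℝ) ^ 4 := by ring
  calc Complex.abs Z ^ 8 ≤ (S.card : ℝ) ^ 4 * ((p : ℝ) ^ 8 * Wre t) := h8'
    _ = (Wre t * (p : ℝ) ^ 4 * (S.card : ℝ) ^ 4) * (p : ℝ) ^ 4 := by ring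
    _ ≤ (Wre t * (p : ℝ) ^ 4 * (S.card : ℝ) ^ 4) * (C ^ 8 * (S.card : ℝ) ^ 4) := by
        refine mul_le_mul_of_nonneg_left key ?_
        positivity
    _ = C ^ 8 * (Wre t / (p : ℝ) ^ 4) * ((p : ℝ) * (S.card : ℝ)) ^ 8 := by
        field_simp




end Aux

open Classical in
lemma card_lower (M N p : ℕ) (hM : 2 ≤ M) (hN : 18 * M ^ 2 ≤ N)
    (hp6 : p < 6 * N)
    (S : Set ℕ) (hS : MultSyndeticWith (Finset.Icc 1 M) S) :
    p ≤ 36 * M ^ 2 * ((Finset.Icc 1 (N / 3)).filter (fun n => n ∈ S)).card := by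
  classical
  set T := (Finset.Icc 1 (N / 3)).filter (fun n => n ∈ S) with hT
  have hM0 : 0 < M := by omega
  have hchoice : ∀ n : ℕ, ∃ t, 0 < n → (t ∈ Finset.Icc 1 M ∧ n * t ∈ S) := by
    intro n
    by_cases h : 0 < n
    · obtain ⟨t, ht, hts⟩ := hS n h
      exact ⟨t, fun _ => ⟨ht, hts⟩⟩
    · exact ⟨1, fun h' => absurd h' h⟩
  choose t ht using hchoice
  have hmaps : ∀ n ∈ Finset.Icc 1 (N / (3 * M)), n * t n ∈ T := by
    intro n hn
    simp only [Finset.mem_Icc] at hn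
    obtain ⟨htm, hts⟩ := ht n (by omega)
    simp only [Finset.mem_Icc] at htm
    have h1 : 1 ≤ n * t n := Nat.one_le_iff_ne_zero.2 (Nat.mul_ne_zero (by omega) (by omega))
    have h2 : n * t n ≤ N / 3 := by
      have hle : n * t n ≤ (N / (3 * M)) * M :=
        Nat.mul_le_mul hn.2 htm.2
      refine hle.trans ?_
      rw [Nat.le_div_iff_mul_le (by omega)]
      calc N / (3 * M) * M * 3 = N / (3 * M) * (3 * M) := by ring
        _ ≤ N := Nat.div_mul_le_self N (3 * M)
    rw [hT]
    simp only [Finset.mem_filter, Finset.mem_Icc]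
    exact ⟨⟨h1, h2⟩, hts⟩
  have hfib : ∀ s ∈ T, ((Finset.Icc 1 (N / (3 * M))).filter
      (fun n => n * t n = s)).card ≤ M := by
    intro s _
    have hsub : (Finset.Icc 1 (N / (3 * M))).filter (fun n => n * t n = s) ⊆
        (Finset.Icc 1 M).image (fun u => s / u) := by
      intro n hn
      simp only [Finset.mem_filter, Finset.mem_Icc] at hn
      obtain ⟨⟨hn1, _⟩, hns⟩ := hn
      obtain ⟨htm, _⟩ := ht n (by omega)
      refine Finset.mem_image.2 ⟨t n, htm, ?_⟩
      simp only [Finset.mem_Icc] at htm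
      rw [← hns, Nat.mul_div_cancel n (by omega)]
    calc ((Finset.Icc 1 (N / (3 * M))).filter (fun n => n * t n = s)).card
        ≤ ((Finset.Icc 1 M).image (fun u => s / u)).card :=
          Finset.card_le_card hsub
      _ ≤ (Finset.Icc 1 M).card := Finset.card_image_le
      _ = M := by rw [Nat.card_Icc]; omega
  have hcard : N / (3 * M) ≤ M * T.card := by
    have := Finset.card_le_mul_card_image_of_maps_to hmaps M hfib
    simpa [Nat.card_Icc] using this
  -- N ≤ 6 M (N / (3M))
  have hq1 : 1 ≤ N / (3 * M) := by
    rw [Nat.le_div_iff_mul_le (by omega)]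
    nlinarith
  have hNle : N ≤ 6 * M * (N / (3 * M)) := by
    have h3 := Nat.lt_div_mul_add (a := N) (b := 3 * M) (by omega)
    nlinarith [h3]
  calc p ≤ 6 * N := by omega
    _ ≤ 6 * (6 * M * (N / (3 * M))) := by omega
    _ ≤ 6 * (6 * M * (M * T.card)) := by
        have := Nat.mul_le_mul_left (6 * M) hcard
        omega
    _ = 36 * M ^ 2 * T.card := by ring


open Classical in
/-- `U³` controls `Λ_{S ∩ [N/3]}`: for a multiplicatively
`[M]`-syndetic `S` and `f, g : ℤ/pℤ → [0,1]`, if `N ≥ 18M²` then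
`|Λ_{S∩[N/3]}(f) − Λ_{S∩[N/3]}(g)| ≤ 18M ‖f − g‖_{U³(ℤ/pℤ)}`. -/
theorem lam_U3_control (M N p : ℕ) (hM : 2 ≤ M) (hN : 18 * M ^ 2 ≤ N)
    (hp : p.Prime) [NeZero p] (hp3 : 3 * N < p) (hp6 : p < 6 * N)
    (S : Set ℕ) (hS : MultSyndeticWith (Finset.Icc 1 M) S)
    (f g : ZMod p → ℝ)
    (hf : ∀ x, f x ∈ Set.Icc (0 : ℝ) 1) (hg : ∀ x, g x ∈ Set.Icc (0 : ℝ) 1) :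
    ‖(Lam p (((Finset.Icc 1 (N / 3)).filter (fun n => n ∈ S)).image
            (Nat.cast : ℕ → ZMod p))
          (fun x => (f x : ℂ)) (fun x => (f x : ℂ)) (fun x => (f x : ℂ)) -
         Lam p (((Finset.Icc 1 (N / 3)).filter (fun n => n ∈ S)).image
            (Nat.cast : ℕ → ZMod p))
          (fun x => (g x : ℂ)) (fun x => (g x : ℂ)) (fun x => (g x : ℂ)))‖ ≤
      18 * (M : ℝ) * gowersU3 p (fun x => (f x : ℂ) - (g x : ℂ)) := by
  classical
  haveI : Fact p.Prime := ⟨hp⟩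
  set T := (Finset.Icc 1 (N / 3)).filter (fun n => n ∈ S) with hT
  set S' := T.image (Nat.cast : ℕ → ZMod p) with hS'
  have hM4 : 4 ≤ M ^ 2 := by nlinarith
  have hcardT : p ≤ 36 * M ^ 2 * T.card := card_lower M N p hM hN hp6 S hS
  have hinj : Set.InjOn (Nat.cast : ℕ → ZMod p) T := by
    intro a ha b hb hab
    simp only [Finset.mem_coe, hT, Finset.mem_filter, Finset.mem_Icc] at ha hb
    have haN : a < p := by
      have h1 : a ≤ N / 3 := ha.1.2
      have h2 : N / 3 ≤ N := Nat.div_le_self N 3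
      omega
    have hbN : b < p := by
      have h1 : b ≤ N / 3 := hb.1.2
      have h2 : N / 3 ≤ N := Nat.div_le_self N 3
      omega
    rw [ZMod.natCast_eq_natCast_iff'] at hab
    rwa [Nat.mod_eq_of_lt haN, Nat.mod_eq_of_lt hbN] at hab
  have hcardS' : S'.card = T.card := Finset.card_image_of_injOn hinj
  have hS0 : 0 < S'.card := by
    rw [hcardS']
    rcases Nat.eq_zero_or_pos T.card with h | h
    · rw [h, Nat.mul_zero] at hcardT
      have := hp.pos
      omega
    · exact h
  have h2 : IsUnit (2 : ZMod p) := by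
    rw [isUnit_iff_ne_zero]
    intro h
    have h2' : ((2 : ℕ) : ZMod p) = 0 := by exact_mod_cast h
    rw [ZMod.natCast_eq_zero_iff] at h2'
    have := Nat.le_of_dvd (by norm_num) h2'
    omega
  set F : ZMod p → ℂ := fun x => ((f x : ℝ) : ℂ) with hF
  set G : ZMod p → ℂ := fun x => ((g x : ℝ) : ℂ) with hG
  set D : ZMod p → ℂ := fun x => ((f x : ℝ) : ℂ) - ((g x : ℝ) : ℂ) with hD
  have hFb : ∀ x, Complex.abs (F x) ≤ 1 := by
    intro x
    obtain ⟨h1, h2⟩ := hf x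
    rw [hF]
    simp only [Complex.abs_ofReal]
    rw [abs_of_nonneg h1]
    exact h2
  have hGb : ∀ x, Complex.abs (G x) ≤ 1 := by
    intro x
    obtain ⟨h1, h2⟩ := hg x
    rw [hG]
    simp only [Complex.abs_ofReal]
    rw [abs_of_nonneg h1]
    exact h2
  have hDb : ∀ x, Complex.abs (D x) ≤ 1 := by
    intro x
    obtain ⟨h1, h2⟩ := hf x
    obtain ⟨h3, h4⟩ := hg x
    rw [hD]
    simp only
    rw [← Complex.ofReal_sub, Complex.abs_ofReal]
    rw [abs_le]
    constructor <;> linarith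
  have hDFG : ∀ x, D x = F x - G x := fun x => rfl
  have tele : Lam p S' F F F - Lam p S' G G G =
      Lam p S' D F F + Lam p S' G D F + Lam p S' G G D := by
    simp only [Lam]
    rw [← mul_sub, ← mul_add, ← mul_add]
    congr 1
    rw [← Finset.sum_sub_distrib, ← Finset.sum_add_distrib, ← Finset.sum_add_distrib]
    refine Finset.sum_congr rfl fun x _ => ?_
    rw [← Finset.sum_sub_distrib, ← Finset.sum_add_distrib, ← Finset.sum_add_distrib]
    refine Finset.sum_congr rfl fun d _ => ?_
    rw [hDFG, hDFG, hDFG]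
    ring
  set C : ℝ := 6 * (M : ℝ) with hC
  have hC0 : (0 : ℝ) ≤ C := by positivity
  have hCineq : (p : ℝ) ≤ C ^ 2 * S'.card := by
    have h1 : (p : ℝ) ≤ 36 * (M : ℝ) ^ 2 * (T.card : ℝ) := by exact_mod_cast hcardT
    have h36 : C ^ 2 * (S'.card : ℝ) = 36 * (M : ℝ) ^ 2 * (T.card : ℝ) := by
      rw [hC, hcardS']
      ring
    rw [h36]
    exact h1
  have key1 : ∀ h : ZMod p,
      Complex.abs (TT (diffOp h D) (diffOp h F) (diffOp h F)) ^ 4 ≤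
        (p : ℝ) ^ 5 * U2S (diffOp h D) := fun h =>
    TT4_1 h2 _ _ _ (diffOp_bdd hFb h) (diffOp_bdd hFb h)
  have key2 : ∀ h : ZMod p,
      Complex.abs (TT (diffOp h G) (diffOp h D) (diffOp h F)) ^ 4 ≤
        (p : ℝ) ^ 5 * U2S (diffOp h D) := fun h =>
    TT4_2 h2 _ _ _ (diffOp_bdd hGb h) (diffOp_bdd hFb h)
  have key3 : ∀ h : ZMod p,
      Complex.abs (TT (diffOp h G) (diffOp h G) (diffOp h D)) ^ 4 ≤
        (p : ℝ) ^ 5 * U2S (diffOp h D) := fun h =>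
    TT4_3 h2 _ _ _ (diffOp_bdd hGb h) (diffOp_bdd hGb h)
  have l1 := lam_le S' hS0 C hC0 hCineq D F F D key1
  have l2 := lam_le S' hS0 C hC0 hCineq G D F D key2
  have l3 := lam_le S' hS0 C hC0 hCineq G G D D key3
  have htri : Complex.abs (Lam p S' F F F - Lam p S' G G G) ≤
      Complex.abs (Lam p S' D F F) + Complex.abs (Lam p S' G D F) +
        Complex.abs (Lam p S' G G D) := by
    rw [tele]
    calc Complex.abs (Lam p S' D F F + Lam p S' G D F + Lam p S' G G D)
        ≤ Complex.abs (Lam p S' D F F + Lam p S' G D F) +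
            Complex.abs (Lam p S' G G D) := Complex.abs.add_le _ _
      _ ≤ Complex.abs (Lam p S' D F F) + Complex.abs (Lam p S' G D F) +
            Complex.abs (Lam p S' G G D) :=
          add_le_add_left (Complex.abs.add_le _ _) _
  have hfinal : C * gowersU3 p D + C * gowersU3 p D + C * gowersU3 p D =
      18 * (M : ℝ) * gowersU3 p D := by
    rw [hC]
    ring
  change Complex.abs _ ≤ _
  linarith [htri, l1, l2, l3]
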